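/- Let G be a bipartite graph on vertex sets B and C with positive real edge weights u_e. Suppose D is a cycle in G with 2-partition (D_0, D_1) (adjacent edges get distinct colors). If there exists a positive price vector p : C → ℝ_{>0} such that for every buyer b on the cycle with incident cycle edges e_0 = (b,c_0) ∈ D_0 and e_1 = (b,c_1) ∈ D_1 we have u_{e_0}/p(c_0) = u_{e_1}/p(c_1), then ∏_{e ∈ D_0} u_e = ∏_{e ∈ D_1} u_e. -/
import Mathlib

open Finset

/-- If a cycle of the utility graph lies in the equality graph of some positive
price vector, then the products of the utilities over the two color classes of
the cycle coincide.  The cycle is represented by buyers `b_0,…,b_{m-1}` and goods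
`c_0,…,c_{m-1}`; the `D_0`-edge of buyer `i` goes to good `i` (utility `u0 i`)
and the `D_1`-edge of buyer `i` goes to good `i+1 (mod m)` (utility `u1 i`). -/
theorem stmt_1 (m : ℕ) [NeZero m] (hm : 1 ≤ m)
    (u0 u1 : Fin m → ℝ) (hu0 : ∀ i, 0 < u0 i) (hu1 : ∀ i, 0 < u1 i)
    (p : Fin m → ℝ) (hp : ∀ i, 0 < p i)
    (heq : ∀ i : Fin m, u0 i / p i = u1 i / p (i + 1)) :
    ∏ i, u0 i = ∏ i, u1 i := by
  have hprod : ∏ i, (u0 i / p i) = ∏ i, (u1 i / p (i + 1)) :=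
    Finset.prod_congr rfl fun i _ => heq i
  have hshift : ∏ i, p (i + 1) = ∏ i, p i :=
    Fintype.prod_equiv (Equiv.addRight (1 : Fin m)) _ _ fun i => rfl
  have hpne : ∏ i, p i ≠ 0 := Finset.prod_ne_zero_iff.2 fun i _ => (hp i).ne'
  rw [Finset.prod_div_distrib, Finset.prod_div_distrib, hshift,
    div_eq_div_iff hpne hpne] at hprod
  exact mul_right_cancel₀ hpne hprod
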